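/- Every ideal class of the polynomial ring ℂ[x,y] contains a unique ideal of finite codimension. That is: every nonzero ideal I ⊆ ℂ[x,y] is isomorphic as a module to an ideal of finite codimension, and if two ideals I, J of finite ℂ-codimension in ℂ[x,y] are isomorphic as ℂ[x,y]-modules, then I = J. -/

import Mathlib

open Polynomial

/-- In a polynomial ring over a GCD domain, an ideal whose elements have no
common nonunit divisor contains a nonzero constant (if it is nonzero). -/
theorem aux_exists_C_mem {T : Type*} [CommRing T] [IsDomain T] [NormalizedGCDMonoid T]
    (J : Ideal (Polynomial T)) (hJ : J ≠ ⊥)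
    (hP : ∀ d : Polynomial T, (∀ f ∈ J, d ∣ f) → IsUnit d) :
    ∃ c : T, c ≠ 0 ∧ Polynomial.C c ∈ J := by
  classical
  -- choose a nonzero element of minimal degree
  obtain ⟨f₀, hf₀J, hf₀⟩ := (Submodule.ne_bot_iff J).mp hJ
  set S : Set ℕ := {k | ∃ f ∈ J, f ≠ 0 ∧ f.natDegree = k} with hS
  have hSne : S.Nonempty := ⟨f₀.natDegree, f₀, hf₀J, hf₀, rfl⟩
  set n := sInf S with hn
  obtain ⟨f, hfJ, hfne, hfdeg⟩ : ∃ f ∈ J, f ≠ 0 ∧ f.natDegree = n := Nat.sInf_mem hSne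
  have hmin : ∀ g ∈ J, g ≠ 0 → n ≤ g.natDegree := fun g hg hg0 =>
    Nat.sInf_le ⟨g, hg, hg0, rfl⟩
  -- the primitive part of f divides every element of J (after clearing lead coeffs)
  set m := f.primPart with hm
  have hmdvd : ∀ g ∈ J, m ∣ g := by
    have key : ∀ N : ℕ, ∀ g ∈ J, g.natDegree < N → ∃ k : ℕ, m ∣ C f.leadingCoeff ^ k * g := by
      intro N
      induction N with
      | zero => intro g _ h; omega
      | succ N ih =>
        intro g hgJ hgN
        by_cases hg0 : g = 0
        · exact ⟨0, by simp [hg0]⟩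
        by_cases hlt : g.natDegree < n
        · exact absurd (hmin g hgJ hg0) (by omega)
        push_neg at hlt
        -- cancellation step
        set j := g.natDegree - n with hj
        set g' := C f.leadingCoeff * g - C g.leadingCoeff * (X ^ j * f) with hg'
        have hg'J : g' ∈ J := by
          exact J.sub_mem (J.mul_mem_left _ hgJ) (J.mul_mem_left _ (J.mul_mem_left _ hfJ))
        have hlcf : f.leadingCoeff ≠ 0 := leadingCoeff_ne_zero.mpr hfne
        have hlcg : g.leadingCoeff ≠ 0 := leadingCoeff_ne_zero.mpr hg0
        have hpne : C f.leadingCoeff * g ≠ 0 := mul_ne_zero (by simpa using hlcf) hg0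
        have hdeg : (C f.leadingCoeff * g).degree = (C g.leadingCoeff * (X ^ j * f)).degree := by
          rw [degree_mul, degree_mul, degree_mul, degree_C hlcf, degree_C hlcg,
            degree_X_pow, degree_eq_natDegree hg0, degree_eq_natDegree hfne, hfdeg]
          rw [zero_add, zero_add]
          rw [← Nat.cast_add]
          norm_cast
          omega
        have hlc : (C f.leadingCoeff * g).leadingCoeff
            = (C g.leadingCoeff * (X ^ j * f)).leadingCoeff := by
          simp [leadingCoeff_mul, leadingCoeff_X_pow, mul_comm]
        have hdlt : g'.degree < g.degree := by
          have := degree_sub_lt hdeg hpne hlc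
          calc g'.degree < (C f.leadingCoeff * g).degree := this
            _ = g.degree := by rw [degree_mul, degree_C hlcf, zero_add]
        have hmf : m ∣ f := f.primPart_dvd
        by_cases hg'0 : g' = 0
        · refine ⟨1, ?_⟩
          have hEq : C f.leadingCoeff * g = C g.leadingCoeff * (X ^ j * f) :=
            sub_eq_zero.mp hg'0
          rw [pow_one, hEq]
          exact ((hmf.mul_left _).mul_left _)
        obtain ⟨k, hk⟩ : ∃ k : ℕ, m ∣ C f.leadingCoeff ^ k * g' := by
          apply ih g' hg'J
          have h1 := natDegree_lt_natDegree hg'0 hdlt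
          omega
        refine ⟨k + 1, ?_⟩
        have hsum : C f.leadingCoeff ^ (k + 1) * g
            = C f.leadingCoeff ^ k * g' + C f.leadingCoeff ^ k * (C g.leadingCoeff * (X ^ j * f)) := by
          rw [hg']; ring
        rw [hsum]
        exact dvd_add hk (((hmf.mul_left _).mul_left _).mul_left _)
    intro g hgJ
    obtain ⟨k, hk⟩ := key (g.natDegree + 1) g hgJ (by omega)
    have hrel : IsRelPrime m (C f.leadingCoeff ^ k) := by
      intro d hdm hdc
      have hcne : (C f.leadingCoeff ^ k : Polynomial T) ≠ 0 := by
        apply pow_ne_zero; simpa using leadingCoeff_ne_zero.mpr hfne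
      have hdeg0 : d.natDegree = 0 := by
        have h1 := natDegree_le_of_dvd hdc hcne
        have h2 : (C f.leadingCoeff ^ k : Polynomial T).natDegree = 0 := by
          simp [natDegree_pow]
        omega
      obtain ⟨a, rfl⟩ := natDegree_eq_zero.mp hdeg0
      have hdvd : a ∣ m.content := (dvd_content_iff_C_dvd).mpr hdm
      rw [show m.content = 1 from f.isPrimitive_primPart.content_eq_one] at hdvd
      exact isUnit_C.mpr (isUnit_of_dvd_one hdvd)
    exact hrel.dvd_of_dvd_mul_right (by rwa [mul_comm] at hk)
  have hmu : IsUnit m := hP m hmdvd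
  refine ⟨f.content, by simpa [content_eq_zero_iff] using hfne, ?_⟩
  obtain ⟨u, hu⟩ := hmu
  have hf' : f = C f.content * ↑u := by
    conv_lhs => rw [f.eq_C_content_mul_primPart]
    rw [← hm, ← hu]
  have hCc : (C f.content : Polynomial T) = f * ↑u⁻¹ := by
    conv_rhs => rw [hf']
    rw [mul_assoc, Units.mul_inv, mul_one]
  rw [hCc]
  exact J.mul_mem_right _ hfJ

open MvPolynomial

noncomputable section

/-- The coefficient-wise identification of `ℂ[x,y]` with `(ℂ[x])[y]`,
sending `X 0` to `Y` (the outer variable) and `X 1` to `C x`. -/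
def auxPsi : MvPolynomial (Fin 2) ℂ ≃ₐ[ℂ] Polynomial (Polynomial ℂ) :=
  (MvPolynomial.finSuccEquiv ℂ 1).trans <| Polynomial.mapAlgEquiv <|
    (MvPolynomial.finSuccEquiv ℂ 0).trans <| Polynomial.mapAlgEquiv <|
      MvPolynomial.isEmptyAlgEquiv ℂ (Fin 0)

theorem auxPsi_X0 : auxPsi (X 0) = Polynomial.X := by
  simp [auxPsi, MvPolynomial.finSuccEquiv_X_zero]

theorem auxPsi_X1 : auxPsi (X 1) = Polynomial.C Polynomial.X := by
  have h1 : (X 1 : MvPolynomial (Fin 2) ℂ) = X (Fin.succ 0) := rfl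
  simp [auxPsi, h1, MvPolynomial.finSuccEquiv_X_succ, MvPolynomial.finSuccEquiv_X_zero]

theorem auxPsi_aeval (c : Polynomial ℂ) :
    auxPsi (Polynomial.aeval (X 1) c) = Polynomial.C c := by
  have h := Polynomial.aeval_algHom_apply auxPsi.toAlgHom (X 1) c
  have h0 : auxPsi.toAlgHom (X 1) = Polynomial.C Polynomial.X := auxPsi_X1
  rw [h0] at h
  rw [show auxPsi (Polynomial.aeval (X 1) c)
    = auxPsi.toAlgHom (Polynomial.aeval (X 1) c) from rfl, ← h]
  have : (Polynomial.C Polynomial.X : Polynomial (Polynomial ℂ))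
      = algebraMap (Polynomial ℂ) (Polynomial (Polynomial ℂ)) Polynomial.X := rfl
  rw [this, Polynomial.aeval_algebraMap_apply]
  simp

end

open MvPolynomial

-- irreducibility transfers backwards along a mul equiv
theorem aux_irreducible_of_map {A B : Type*} [Monoid A] [Monoid B] (e : A ≃* B) {x : A}
    (h : Irreducible (e x)) : Irreducible x := by
  constructor
  · intro hx
    exact h.not_isUnit (hx.map e)
  · intro a b hab
    rcases h.isUnit_or_isUnit (by rw [hab, map_mul]) with h' | h'
    · left
      have := h'.map e.symm
      simpa using this
    · right
      have := h'.map e.symm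
      simpa using this

set_option maxHeartbeats 800000 in
set_option synthInstance.maxHeartbeats 200000 in
theorem aux_finiteDim (J : Ideal (MvPolynomial (Fin 2) ℂ))
    (h : ∀ i : Fin 2, ∃ c : Polynomial ℂ, c ≠ 0 ∧ Polynomial.aeval (X i) c ∈ J) :
    Module.Finite ℂ (MvPolynomial (Fin 2) ℂ ⧸ J) := by
  classical
  let mk := Ideal.Quotient.mkₐ ℂ J
  have hmk : mk = Ideal.Quotient.mkₐ ℂ J := rfl
  have hsurj : Function.Surjective mk := Ideal.Quotient.mkₐ_surjective ℂ J
  have h1 : Algebra.adjoin ℂ (mk '' Set.range (X : Fin 2 → MvPolynomial (Fin 2) ℂ)) = ⊤ := by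
    rw [← AlgHom.map_adjoin, MvPolynomial.adjoin_range_X, Algebra.map_top,
      AlgHom.range_eq_top]
    exact hsurj
  have hfin : (mk '' Set.range (X : Fin 2 → MvPolynomial (Fin 2) ℂ)).Finite :=
    (Set.finite_range _).image _
  have hint : ∀ x ∈ mk '' Set.range (X : Fin 2 → MvPolynomial (Fin 2) ℂ), IsIntegral ℂ x := by
    rintro x ⟨-, ⟨i, rfl⟩, rfl⟩
    obtain ⟨c, hc0, hcJ⟩ := h i
    refine (IsAlgebraic.isIntegral ⟨c, hc0, ?_⟩)
    rw [Polynomial.aeval_algHom_apply mk (X i) c]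
    simpa [hmk, Ideal.Quotient.mkₐ_eq_mk, Ideal.Quotient.eq_zero_iff_mem] using hcJ
  have hfg := fg_adjoin_of_finite hfin hint
  rw [h1] at hfg
  exact ⟨by rwa [Algebra.top_toSubmodule] at hfg⟩

noncomputable section

/-- Variant of `auxPsi` adapted to variable `i`: sends `X i` to the outer variable. -/
def auxPsiSwap : MvPolynomial (Fin 2) ℂ ≃ₐ[ℂ] Polynomial (Polynomial ℂ) :=
  (MvPolynomial.renameEquiv ℂ (Equiv.swap (0 : Fin 2) 1)).trans auxPsi

theorem auxPsiSwap_X1 : auxPsiSwap (X 1) = Polynomial.X := by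
  simp only [auxPsiSwap, AlgEquiv.trans_apply, MvPolynomial.renameEquiv_apply,
    MvPolynomial.rename_X, Equiv.swap_apply_right]
  exact auxPsi_X0

theorem auxPsiSwap_aeval (c : Polynomial ℂ) :
    auxPsiSwap (Polynomial.aeval (X 0) c) = Polynomial.C c := by
  have h := Polynomial.aeval_algHom_apply auxPsiSwap.toAlgHom (X 0) c
  have h0 : auxPsiSwap.toAlgHom (X 0) = Polynomial.C Polynomial.X := by
    show auxPsiSwap (X 0) = _
    simp only [auxPsiSwap, AlgEquiv.trans_apply, MvPolynomial.renameEquiv_apply,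
      MvPolynomial.rename_X, Equiv.swap_apply_left]
    exact auxPsi_X1
  rw [h0] at h
  rw [show auxPsiSwap (Polynomial.aeval (X 0) c)
    = auxPsiSwap.toAlgHom (Polynomial.aeval (X 0) c) from rfl, ← h]
  have : (Polynomial.C Polynomial.X : Polynomial (Polynomial ℂ))
      = algebraMap (Polynomial ℂ) (Polynomial (Polynomial ℂ)) Polynomial.X := rfl
  rw [this, Polynomial.aeval_algebraMap_apply]
  simp

/-- `X i - C r` is irreducible in `ℂ[x,y]`. -/
theorem aux_irreducible_X_sub_C (i : Fin 2) (r : ℂ) :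
    Irreducible (X i - MvPolynomial.C r : MvPolynomial (Fin 2) ℂ) := by
  have key : ∀ (j : Fin 2) (ψ : MvPolynomial (Fin 2) ℂ ≃ₐ[ℂ] Polynomial (Polynomial ℂ)),
      ψ (X j) = Polynomial.X →
      Irreducible (X j - MvPolynomial.C r : MvPolynomial (Fin 2) ℂ) := by
    intro j ψ hψ
    apply aux_irreducible_of_map ψ.toMulEquiv
    have hC : ψ (X j - MvPolynomial.C r)
        = Polynomial.X - Polynomial.C (Polynomial.C r) := by
      rw [map_sub, hψ]
      congr 1
      rw [show (MvPolynomial.C r : MvPolynomial (Fin 2) ℂ) = algebraMap ℂ _ r from rfl]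
      rw [AlgEquiv.commutes]
      rfl
    rw [show ψ.toMulEquiv (X j - MvPolynomial.C r) = ψ (X j - MvPolynomial.C r) from rfl, hC]
    exact Polynomial.irreducible_X_sub_C _
  match i with
  | 0 => exact key 0 auxPsi auxPsi_X0
  | 1 => exact key 1 auxPsiSwap auxPsiSwap_X1

end

set_option maxHeartbeats 1000000 in
set_option synthInstance.maxHeartbeats 400000 in
/-- If the quotient by a nonzero ideal of `ℂ[x,y]` is finite-dimensional, then
the elements of the ideal have no common nonunit divisor. -/
theorem aux_P_of_finiteDim (J : Ideal (MvPolynomial (Fin 2) ℂ)) (hJ : J ≠ ⊥)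
    (hfd : FiniteDimensional ℂ (MvPolynomial (Fin 2) ℂ ⧸ J)) :
    ∀ d : MvPolynomial (Fin 2) ℂ, (∀ f ∈ J, d ∣ f) → IsUnit d := by
  classical
  intro d hd
  by_contra hdu
  obtain ⟨f0, hf0J, hf0⟩ := (Submodule.ne_bot_iff J).mp hJ
  have hd0 : d ≠ 0 := by
    rintro rfl
    exact hf0 (by simpa using hd f0 hf0J)
  have hle : J ≤ Ideal.span {d} := fun x hx => Ideal.mem_span_singleton.mpr (hd x hx)
  -- the quotient by `span {d}` is finite-dimensional as well
  have hsurj : Function.Surjective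
      (Ideal.quotientMapₐ (R₁ := ℂ) (Ideal.span {d}) (AlgHom.id ℂ _) hle) := by
    intro x
    obtain ⟨y, rfl⟩ := Ideal.Quotient.mk_surjective x
    exact ⟨Ideal.Quotient.mk J y, rfl⟩
  have hfd2 : FiniteDimensional ℂ (MvPolynomial (Fin 2) ℂ ⧸ Ideal.span {d}) :=
    Module.Finite.of_surjective
      (Ideal.quotientMapₐ (R₁ := ℂ) (Ideal.span {d}) (AlgHom.id ℂ _) hle).toLinearMap hsurj
  -- each variable is algebraic modulo `span {d}`
  have hvar : ∀ i : Fin 2, ∃ c : Polynomial ℂ, c ≠ 0 ∧ d ∣ Polynomial.aeval (X i) c := by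
    intro i
    have hint : IsIntegral ℂ (Ideal.Quotient.mkₐ ℂ (Ideal.span {d}) (X i)) :=
      Algebra.IsIntegral.isIntegral _
    refine ⟨minpoly ℂ _, minpoly.ne_zero hint, ?_⟩
    rw [← Ideal.mem_span_singleton]
    have := minpoly.aeval ℂ (Ideal.Quotient.mkₐ ℂ (Ideal.span {d}) (X i))
    rw [Polynomial.aeval_algHom_apply (Ideal.Quotient.mkₐ ℂ (Ideal.span {d})) (X i)] at this
    simpa [Ideal.Quotient.mkₐ_eq_mk, Ideal.Quotient.eq_zero_iff_mem] using this
  -- pick an irreducible factor of d; it divides a poly in `X i` alone, for each i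
  obtain ⟨e, he_irr, he_dvd⟩ := WfDvdMonoid.exists_irreducible_factor hdu hd0
  have he_prime : Prime e := UniqueFactorizationMonoid.irreducible_iff_prime.mp he_irr
  have hlin : ∀ i : Fin 2, ∃ r : ℂ, e ∣ (X i - MvPolynomial.C r) := by
    intro i
    obtain ⟨c, hc0, hcd⟩ := hvar i
    have hsplit : Polynomial.Splits c := IsAlgClosed.splits c
    have heq := hsplit.eq_prod_roots
    have hdvd : e ∣ Polynomial.aeval (X i) c := he_dvd.trans hcd
    rw [heq] at hdvd
    rw [map_mul, Polynomial.aeval_C] at hdvd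
    have hCunit : IsUnit (algebraMap ℂ (MvPolynomial (Fin 2) ℂ) c.leadingCoeff) :=
      (isUnit_iff_ne_zero.mpr (Polynomial.leadingCoeff_ne_zero.mpr hc0)).map
        (algebraMap ℂ (MvPolynomial (Fin 2) ℂ))
    have hdvd2 : e ∣ Polynomial.aeval (X i)
        (c.roots.map fun a => Polynomial.X - Polynomial.C a).prod := by
      rcases he_prime.2.2 _ _ hdvd with h' | h'
      · exact absurd (isUnit_of_dvd_unit h' hCunit) he_prime.not_unit
      · exact h'
    rw [show Polynomial.aeval (MvPolynomial.X i : MvPolynomial (Fin 2) ℂ)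
          ((c.roots.map fun a => Polynomial.X - Polynomial.C a).prod)
        = ((c.roots.map fun a => Polynomial.X - Polynomial.C a).map
            (Polynomial.aeval (MvPolynomial.X i : MvPolynomial (Fin 2) ℂ))).prod from
      (map_multiset_prod (Polynomial.aeval
        (MvPolynomial.X i : MvPolynomial (Fin 2) ℂ)) _)] at hdvd2
    rw [Multiset.map_map] at hdvd2
    obtain ⟨t, ht_mem, ht_dvd⟩ := he_prime.exists_mem_multiset_dvd hdvd2
    obtain ⟨r, _, rfl⟩ := Multiset.mem_map.mp ht_mem
    refine ⟨r, ?_⟩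
    simpa [Polynomial.aeval_X, Polynomial.aeval_C] using ht_dvd
  obtain ⟨r, hr⟩ := hlin 0
  obtain ⟨s, hs⟩ := hlin 1
  have h0 : Associated e (X 0 - MvPolynomial.C r) :=
    he_irr.associated_of_dvd (aux_irreducible_X_sub_C 0 r) hr
  have h1 : Associated e (X 1 - MvPolynomial.C s) :=
    he_irr.associated_of_dvd (aux_irreducible_X_sub_C 1 s) hs
  have hdvd01 : (X 0 - MvPolynomial.C r : MvPolynomial (Fin 2) ℂ)
      ∣ (X 1 - MvPolynomial.C s) := (h0.symm.trans h1).dvd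
  -- evaluate at x = r to get a contradiction
  have hchi := map_dvd (MvPolynomial.aeval
    (![Polynomial.C r, Polynomial.X] : Fin 2 → Polynomial ℂ)) hdvd01
  simp only [map_sub, MvPolynomial.aeval_X, MvPolynomial.aeval_C,
    Matrix.cons_val_zero, Matrix.cons_val_one, Matrix.head_cons,
    Polynomial.algebraMap_eq, sub_self] at hchi
  rw [zero_dvd_iff, sub_eq_zero] at hchi
  exact Polynomial.X_ne_C s hchi

set_option maxHeartbeats 1000000 in
set_option synthInstance.maxHeartbeats 400000 in
/-- If a nonzero ideal of `ℂ[x,y]` has no common nonunit divisor, it contains, for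
each variable, a nonzero polynomial in that variable alone. -/
theorem aux_exists_aeval (J : Ideal (MvPolynomial (Fin 2) ℂ)) (hJ : J ≠ ⊥)
    (hP : ∀ d : MvPolynomial (Fin 2) ℂ, (∀ f ∈ J, d ∣ f) → IsUnit d) :
    ∀ i : Fin 2, ∃ c : Polynomial ℂ, c ≠ 0 ∧ Polynomial.aeval (X i) c ∈ J := by
  classical
  have key : ∀ (i : Fin 2) (ψ : MvPolynomial (Fin 2) ℂ ≃ₐ[ℂ] Polynomial (Polynomial ℂ)),
      (∀ c : Polynomial ℂ, ψ (Polynomial.aeval (X i) c) = Polynomial.C c) →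
      ∃ c : Polynomial ℂ, c ≠ 0 ∧ Polynomial.aeval (X i) c ∈ J := by
    intro i ψ hψ
    set φ : MvPolynomial (Fin 2) ℂ →+* Polynomial (Polynomial ℂ) := ψ.toAlgHom.toRingHom
    have hφs : Function.Surjective φ := ψ.surjective
    have hφi : Function.Injective φ := ψ.injective
    set J' : Ideal (Polynomial (Polynomial ℂ)) := J.map φ with hJ'
    have hJ'ne : J' ≠ ⊥ := by
      obtain ⟨f0, hf0J, hf0⟩ := (Submodule.ne_bot_iff J).mp hJ
      intro hbot
      have : φ f0 ∈ J' := Ideal.mem_map_of_mem φ hf0J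
      rw [hbot, Ideal.mem_bot] at this
      exact hf0 (hφi (by simpa using this))
    have hJ'P : ∀ d ∈ {d : Polynomial (Polynomial ℂ) | ∀ f ∈ J', d ∣ f}, IsUnit d := by
      intro d hd
      have hsym : ∀ f ∈ J, ψ.symm d ∣ f := by
        intro f hf
        have h1 : d ∣ φ f := hd _ (Ideal.mem_map_of_mem φ hf)
        have h2 := map_dvd ψ.symm h1
        rwa [show ψ.symm (φ f) = f from ψ.symm_apply_apply f] at h2
      have := hP _ hsym
      have h3 := this.map ψ.toAlgHom.toRingHom
      simpa using h3
    obtain ⟨c, hc0, hCc⟩ := aux_exists_C_mem J' hJ'ne (fun d hd => hJ'P d hd)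
    refine ⟨c, hc0, ?_⟩
    obtain ⟨x, hxJ, hxeq⟩ := Ideal.mem_map_iff_of_surjective φ hφs |>.mp hCc
    have : x = Polynomial.aeval (X i) c := hφi (by rw [hxeq, show φ (Polynomial.aeval (X i) c) = ψ (Polynomial.aeval (X i) c) from rfl, hψ])
    rwa [← this]
  intro i
  match i with
  | 0 => exact key 0 auxPsiSwap auxPsiSwap_aeval
  | 1 => exact key 1 auxPsi auxPsi_aeval

set_option maxHeartbeats 1000000 in
set_option synthInstance.maxHeartbeats 400000 in
theorem aux_existence (I : Ideal (MvPolynomial (Fin 2) ℂ)) (hI : I ≠ ⊥) :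
    ∃ J : Ideal (MvPolynomial (Fin 2) ℂ),
      FiniteDimensional ℂ (MvPolynomial (Fin 2) ℂ ⧸ J) ∧
      Nonempty (I ≃ₗ[MvPolynomial (Fin 2) ℂ] J) := by
  classical
  letI : NormalizationMonoid (MvPolynomial (Fin 2) ℂ) :=
    UniqueFactorizationMonoid.normalizationMonoid.toNormalizationMonoid
  letI := UniqueFactorizationMonoid.toNormalizedGCDMonoid (MvPolynomial (Fin 2) ℂ)
  obtain ⟨S, hS⟩ := IsNoetherian.noetherian I
  set g : MvPolynomial (Fin 2) ℂ := S.gcd id with hg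
  have hg0 : g ≠ 0 := by
    intro h0
    apply hI
    rw [← hS]
    apply Submodule.span_eq_bot.mpr
    intro x hx
    exact Finset.gcd_eq_zero_iff.mp h0 x hx
  have hgdvd : ∀ b ∈ I, g ∣ b := by
    intro b hb
    rw [← Ideal.mem_span_singleton]
    have hle : I ≤ Ideal.span {g} := by
      rw [← hS]
      apply Submodule.span_le.mpr
      intro s hs
      exact Ideal.mem_span_singleton.mpr (Finset.gcd_dvd hs)
    exact hle hb
  set J : Ideal (MvPolynomial (Fin 2) ℂ) :=
    Submodule.comap (LinearMap.mul _ _ g) I with hJdef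
  have hmemJ : ∀ x, x ∈ J ↔ g * x ∈ I := fun x => Iff.rfl
  have hJne : J ≠ ⊥ := by
    obtain ⟨s, hsI, hs0⟩ := (Submodule.ne_bot_iff I).mp hI
    obtain ⟨x, hx⟩ := hgdvd s hsI
    refine (Submodule.ne_bot_iff J).mpr ⟨x, ?_, ?_⟩
    · rw [hmemJ, ← hx]; exact hsI
    · rintro rfl; exact hs0 (by simpa using hx)
  have hPJ : ∀ d, (∀ x ∈ J, d ∣ x) → IsUnit d := by
    intro d hd
    have hgd : ∀ s ∈ S, g * d ∣ s := by
      intro s hs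
      have hsI : s ∈ I := by
        rw [← hS]; exact Submodule.subset_span hs
      obtain ⟨x, hx⟩ := hgdvd s hsI
      have hxJ : x ∈ J := by rw [hmemJ, ← hx]; exact hsI
      rw [hx]
      exact mul_dvd_mul_left g (hd x hxJ)
    have h1 : g * d ∣ g := Finset.dvd_gcd hgd
    have h2 : d ∣ 1 := (mul_dvd_mul_iff_left hg0).mp (by simpa using h1)
    exact isUnit_of_dvd_one h2
  have hres : ∀ x ∈ J, (LinearMap.mul _ _ g) x ∈ I := fun x hx => hx
  set f : J →ₗ[MvPolynomial (Fin 2) ℂ] I :=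
    (LinearMap.mul (MvPolynomial (Fin 2) ℂ) (MvPolynomial (Fin 2) ℂ) g).restrict hres with hfdef
  have hinj : Function.Injective f := by
    rintro ⟨x, hx⟩ ⟨y, hy⟩ h
    have h1 : g * x = g * y := congrArg Subtype.val h
    exact Subtype.ext (mul_left_cancel₀ hg0 h1)
  have hsurjf : Function.Surjective f := by
    rintro ⟨b, hb⟩
    obtain ⟨x, hx⟩ := hgdvd b hb
    have hxJ : x ∈ J := by rw [hmemJ, ← hx]; exact hb
    exact ⟨⟨x, hxJ⟩, Subtype.ext hx.symm⟩
  refine ⟨J, aux_finiteDim J (aux_exists_aeval J hJne hPJ), ⟨(LinearEquiv.ofBijective f ⟨hinj, hsurjf⟩).symm⟩⟩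

set_option maxHeartbeats 1000000 in
set_option synthInstance.maxHeartbeats 400000 in
theorem aux_uniqueness (I J : Ideal (MvPolynomial (Fin 2) ℂ))
    (hfI : FiniteDimensional ℂ (MvPolynomial (Fin 2) ℂ ⧸ I))
    (hfJ : FiniteDimensional ℂ (MvPolynomial (Fin 2) ℂ ⧸ J))
    (hiso : Nonempty (I ≃ₗ[MvPolynomial (Fin 2) ℂ] J)) : I = J := by
  classical
  obtain ⟨φ⟩ := hiso
  by_cases hIbot : I = ⊥
  · subst hIbot
    symm
    rw [Submodule.eq_bot_iff]
    intro y hy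
    obtain ⟨x, hx⟩ := φ.surjective ⟨y, hy⟩
    have hx0 : x = 0 := Subtype.ext ((Submodule.mem_bot _).mp x.2)
    rw [hx0, map_zero] at hx
    exact (congrArg Subtype.val hx).symm
  by_cases hJbot : J = ⊥
  · subst hJbot
    rw [Submodule.eq_bot_iff]
    intro x hx
    have h1 : φ ⟨x, hx⟩ = 0 :=
      Subtype.ext ((Submodule.mem_bot _).mp (φ ⟨x, hx⟩).2)
    have h2 : (⟨x, hx⟩ : I) = 0 := by
      apply φ.injective
      simpa using h1
    exact congrArg Subtype.val h2
  letI : NormalizationMonoid (MvPolynomial (Fin 2) ℂ) :=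
    UniqueFactorizationMonoid.normalizationMonoid.toNormalizationMonoid
  letI := UniqueFactorizationMonoid.toNormalizedGCDMonoid (MvPolynomial (Fin 2) ℂ)
  have hPI := aux_P_of_finiteDim I hIbot hfI
  have hPJ := aux_P_of_finiteDim J hJbot hfJ
  obtain ⟨a, haI, ha0⟩ := (Submodule.ne_bot_iff I).mp hIbot
  set p : MvPolynomial (Fin 2) ℂ := ↑(φ ⟨a, haI⟩) with hpdef
  have hp0 : p ≠ 0 := by
    intro h
    have h1 : φ ⟨a, haI⟩ = 0 := Subtype.ext h
    have h2 : (⟨a, haI⟩ : I) = 0 := by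
      apply φ.injective
      simpa using h1
    exact ha0 (congrArg Subtype.val h2)
  have key : ∀ b (hb : b ∈ I), p * b = a * ↑(φ ⟨b, hb⟩) := by
    intro b hb
    have h3 : (b • (⟨a, haI⟩ : I)) = a • (⟨b, hb⟩ : I) := by
      apply Subtype.ext
      simp only [SetLike.val_smul, smul_eq_mul]
      ring
    have h4 := congrArg (fun z => (↑(φ z) : MvPolynomial (Fin 2) ℂ)) h3
    simp only [map_smul, SetLike.val_smul, smul_eq_mul] at h4
    rw [← hpdef] at h4
    rw [mul_comm p b]
    exact h4
  set g : MvPolynomial (Fin 2) ℂ := gcd a p with hgdef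
  obtain ⟨a', ha'⟩ : g ∣ a := gcd_dvd_left a p
  obtain ⟨p', hp'⟩ : g ∣ p := gcd_dvd_right a p
  have hg0 : g ≠ 0 := by
    intro h
    rw [h, zero_mul] at ha'
    exact ha0 ha'
  have hrel : IsRelPrime a' p' := by
    intro d hda hdp
    have h1 : g * d ∣ a := by rw [ha']; exact mul_dvd_mul_left g hda
    have h2 : g * d ∣ p := by rw [hp']; exact mul_dvd_mul_left g hdp
    have h3 : g * d ∣ g := dvd_gcd h1 h2
    exact isUnit_of_dvd_one ((mul_dvd_mul_iff_left hg0).mp (by simpa using h3))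
  have hA : ∀ b ∈ I, a' ∣ b := by
    intro b hb
    have h1 : a ∣ p * b := Dvd.intro _ (key b hb).symm
    have h2 : g * a' ∣ g * (p' * b) := by
      rw [← ha']
      convert h1 using 1
      rw [hp']; ring
    exact hrel.dvd_of_dvd_mul_left ((mul_dvd_mul_iff_left hg0).mp h2)
  have hB : ∀ j ∈ J, p' ∣ j := by
    intro j hj
    obtain ⟨⟨b, hbI⟩, hbeq⟩ := φ.surjective ⟨j, hj⟩
    have h0 : ↑(φ ⟨b, hbI⟩) = j := congrArg Subtype.val hbeq
    have h1 : p ∣ a * j := by rw [← h0]; exact Dvd.intro _ (key b hbI)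
    have h2 : g * p' ∣ g * (a' * j) := by
      rw [← hp']
      convert h1 using 1
      rw [ha']; ring
    exact hrel.symm.dvd_of_dvd_mul_left ((mul_dvd_mul_iff_left hg0).mp h2)
  obtain ⟨u, hu⟩ := hPI a' hA
  obtain ⟨v, hv⟩ := hPJ p' hB
  apply le_antisymm
  · intro x hx
    have h1 := key x hx
    have h2 : g * (p' * x) = g * (a' * ↑(φ ⟨x, hx⟩)) := by
      rw [← mul_assoc, ← mul_assoc, ← hp', ← ha']
      exact h1
    have h3 : p' * x = a' * ↑(φ ⟨x, hx⟩) := mul_left_cancel₀ hg0 h2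
    have h4 : x = ↑v⁻¹ * (a' * ↑(φ ⟨x, hx⟩)) := by
      rw [← h3, ← hv, ← mul_assoc, Units.inv_mul, one_mul]
    rw [h4]
    exact J.mul_mem_left _ (J.mul_mem_left _ (φ ⟨x, hx⟩).2)
  · intro y hy
    obtain ⟨⟨b, hbI⟩, hbeq⟩ := φ.surjective ⟨y, hy⟩
    have h0 : ↑(φ ⟨b, hbI⟩) = y := congrArg Subtype.val hbeq
    have h1 : p * b = a * y := by rw [← h0]; exact key b hbI
    have h2 : g * (p' * b) = g * (a' * y) := by
      rw [← mul_assoc, ← mul_assoc, ← hp', ← ha']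
      exact h1
    have h3 : p' * b = a' * y := mul_left_cancel₀ hg0 h2
    have h4 : y = ↑u⁻¹ * (p' * b) := by
      rw [h3, ← hu, ← mul_assoc, Units.inv_mul, one_mul]
    rw [h4]
    exact I.mul_mem_left _ (I.mul_mem_left _ hbI)

/-- Every ideal class of `ℂ[x,y]` contains a unique ideal of finite codimension: every
nonzero ideal is isomorphic (as a module) to an ideal of finite codimension, and two
isomorphic ideals of finite codimension are equal. -/
theorem polynomial_ring_finite_codim_representative :
    (∀ I : Ideal (MvPolynomial (Fin 2) ℂ), I ≠ ⊥ →
      ∃ J : Ideal (MvPolynomial (Fin 2) ℂ),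
        FiniteDimensional ℂ (MvPolynomial (Fin 2) ℂ ⧸ J) ∧
        Nonempty (I ≃ₗ[MvPolynomial (Fin 2) ℂ] J)) ∧
    (∀ I J : Ideal (MvPolynomial (Fin 2) ℂ),
      FiniteDimensional ℂ (MvPolynomial (Fin 2) ℂ ⧸ I) →
      FiniteDimensional ℂ (MvPolynomial (Fin 2) ℂ ⧸ J) →
      Nonempty (I ≃ₗ[MvPolynomial (Fin 2) ℂ] J) → I = J) :=
  ⟨aux_existence, aux_uniqueness⟩
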